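/- Suppose (φ_n) is a sequence of measurable tests φ_n : X^n → {0,1,2} and i ∈ {0,1} is such that under an i.i.d. probability measure P, the probability P^n(φ_n = i) → 1. Define Y_{n,j} as the indicator that φ_{k_n} applied to the j-th block of k_n = ⌊log n⌋ consecutive samples equals i, for j = 0, ..., m_n − 1 with m_n = ⌊n / k_n⌋, and let ψ_n = i if (1/m_n)∑_j Y_{n,j} > 1/2. Then P^∞(ψ_n ≠ i for only finitely many n) = 1. -/

import Mathlib

open MeasureTheory Filter Topology

/-- block length -/
noncomputable def kk (n : ℕ) : ℕ := ⌊Real.log n⌋₊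

/-- number of blocks -/
noncomputable def mm (n : ℕ) : ℕ := n / kk n

section Aux

open Set
open scoped ENNReal


lemma udiv_lt {k m u : ℕ} (hk : 0 < k) (h : u < k * m) : u / k < m :=
  (Nat.div_lt_iff_lt_mul hk).mpr (lt_of_lt_of_le h (mul_comm k m).le)

lemma blk_lt {k m : ℕ} (j : Fin m) (t : Fin k) : k * (j : ℕ) + (t : ℕ) < k * m := by
  have h1 : k * ((j : ℕ) + 1) ≤ k * m := Nat.mul_le_mul_left _ j.isLt
  rw [Nat.mul_add, Nat.mul_one] at h1
  exact lt_of_lt_of_le (by omega) h1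

/-- the block regrouping map -/
def blkG {X : Type*} (k m : ℕ) (x : Fin (k * m) → X) (j : Fin m) (t : Fin k) : X :=
  x ⟨k * j + t, blk_lt j t⟩

lemma blkG_measurable {X : Type*} [MeasurableSpace X] (k m : ℕ) :
    Measurable (blkG (X := X) k m) :=
  measurable_pi_lambda _ fun _ => measurable_pi_lambda _ fun _ => measurable_pi_apply _

lemma blkG_measurePreserving {X : Type*} [MeasurableSpace X] (P : Measure X)
    [IsProbabilityMeasure P] (k m : ℕ) (hk : 0 < k) :
    MeasurePreserving (blkG k m) (Measure.pi fun _ : Fin (k * m) => P)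
      (Measure.pi fun _ : Fin m => Measure.pi fun _ : Fin k => P) := by
  refine ⟨blkG_measurable k m, ?_⟩
  refine (Measure.pi_eq_generateFrom (C := fun _ : Fin m =>
      Set.pi univ '' Set.pi univ fun _ : Fin k => {s : Set X | MeasurableSet s})
      (fun _ => generateFrom_pi) (fun _ => isPiSystem_pi) (fun _ => ?_) ?_).symm
  · refine ⟨fun _ => univ, fun _ => ⟨fun _ => univ, fun _ _ => MeasurableSet.univ, by
      simp⟩, fun _ => by simp, iUnion_const _⟩
  · intro s hs
    choose c hc hceq using hs
    have hcm : ∀ j t, MeasurableSet (c j t) := fun j t => hc j t (mem_univ t)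
    have hsm : ∀ j, MeasurableSet (s j) := fun j => by
      rw [← hceq j]; exact MeasurableSet.univ_pi (hcm j)
    rw [Measure.map_apply (blkG_measurable k m) (MeasurableSet.univ_pi hsm)]
    have hpre : blkG (X := X) k m ⁻¹' (univ.pi s) =
        univ.pi (fun u : Fin (k * m) =>
          c ⟨(u : ℕ) / k, udiv_lt hk u.isLt⟩
            ⟨(u : ℕ) % k, Nat.mod_lt _ hk⟩) := by
      ext x
      simp only [mem_preimage, mem_univ_pi]
      constructor
      · intro h u
        have h2 := h ⟨(u : ℕ) / k, udiv_lt hk u.isLt⟩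
        rw [← hceq] at h2
        have h3 := h2 ⟨(u : ℕ) % k, Nat.mod_lt _ hk⟩ (mem_univ _)
        convert h3 using 2
        simp only [blkG]
        congr 1
        exact (Fin.ext (Nat.div_add_mod _ _)).symm
      · intro h j
        rw [← hceq]
        intro t _
        have h2 := h ⟨k * j + t, blk_lt j t⟩
        simp only [blkG]
        convert h2 using 2 <;>
          simp [Nat.mul_add_div hk, Nat.div_eq_of_lt t.isLt, Nat.mul_add_mod,
            Nat.mod_eq_of_lt t.isLt]
    rw [hpre, Measure.pi_pi]
    have hrhs : ∀ j, (Measure.pi fun _ : Fin k => P) (s j) = ∏ t, P (c j t) := fun j => by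
      rw [← hceq, Measure.pi_pi]
    rw [Finset.prod_congr rfl fun j _ => hrhs j, ← Fintype.prod_prod_type' (fun j t => P (c j t))]
    refine (Fintype.prod_equiv (finProdFinEquiv.trans (finCongr (mul_comm m k)))
      _ _ fun p => ?_).symm
    have h1 : ((((finProdFinEquiv.trans (finCongr (mul_comm m k))) p) : ℕ)) =
        (p.2 : ℕ) + k * (p.1 : ℕ) := rfl
    have e1 : (⟨(((finProdFinEquiv.trans (finCongr (mul_comm m k))) p : ℕ)) / k,
        udiv_lt hk (Fin.isLt _)⟩ : Fin m) = p.1 :=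
      Fin.ext (by simp [h1, Nat.add_mul_div_left _ _ hk, Nat.div_eq_of_lt p.2.isLt])
    have e2 : (⟨(((finProdFinEquiv.trans (finCongr (mul_comm m k))) p : ℕ)) % k,
        Nat.mod_lt _ hk⟩ : Fin k) = p.2 :=
      Fin.ext (by simp [h1, Nat.add_mul_mod_self_left, Nat.mod_eq_of_lt p.2.isLt])
    rw [e1, e2]


lemma badBound {X : Type*} [MeasurableSpace X] (P : Measure X) [IsProbabilityMeasure P]
    {k m : ℕ} (hm : 0 < m) (f : (Fin k → X) → ℕ) (hf : Measurable f) (i : ℕ)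
    (hq : (Measure.pi fun _ : Fin k => P) {x | ¬ f x = i} ≤ (8 : ℝ≥0∞)⁻¹ ^ 2) :
    (Measure.pi fun _ : Fin m => Measure.pi fun _ : Fin k => P)
      {y | ¬ ((1/2 : ℝ) < (m : ℝ)⁻¹ * ∑ j : Fin m, if f (y j) = i then (1:ℝ) else 0)}
      ≤ (4 : ℝ≥0∞)⁻¹ ^ m := by
  classical
  set ν : Measure (Fin k → X) := Measure.pi fun _ : Fin k => P with hν
  set Pm : Measure (Fin m → Fin k → X) := Measure.pi fun _ : Fin m => ν with hPm
  set C : Set (Fin k → X) := {x | ¬ f x = i} with hCdef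
  set r : ℕ := m - m / 2 with hr
  have hsub : {y : Fin m → Fin k → X |
        ¬ ((1/2 : ℝ) < (m : ℝ)⁻¹ * ∑ j : Fin m, if f (y j) = i then (1:ℝ) else 0)} ⊆
      ⋃ S ∈ Finset.powersetCard r (Finset.univ : Finset (Fin m)),
        Set.pi ↑S (fun _ => C) := by
    intro y hy
    simp only [mem_setOf_eq, not_lt] at hy
    rw [Finset.sum_boole] at hy
    set c := (Finset.univ.filter fun j => f (y j) = i).card with hc
    have hmpos : (0:ℝ) < m := by exact_mod_cast hm
    have h3 : (c:ℝ) ≤ (m:ℝ) * (1/2) := by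
      calc (c:ℝ) = m * ((m:ℝ)⁻¹ * c) := by field_simp
      _ ≤ m * (1/2) := mul_le_mul_of_nonneg_left hy hmpos.le
    have h4 : 2 * c ≤ m := by exact_mod_cast (by linarith : (2*c:ℝ) ≤ m)
    have hT : c + (Finset.univ.filter fun j => ¬ f (y j) = i).card = m := by
      rw [Finset.card_filter_add_card_filter_not]
      simp
    have hrT : r ≤ (Finset.univ.filter fun j => ¬ f (y j) = i).card := by omega
    obtain ⟨S, hST, hScard⟩ :=
      Finset.exists_subset_card_eq (s := Finset.univ.filter fun j => ¬ f (y j) = i) hrT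
    refine mem_iUnion₂.mpr ⟨S, Finset.mem_powersetCard.mpr ⟨Finset.subset_univ S, hScard⟩,
      fun j hj => ?_⟩
    exact (Finset.mem_filter.mp (hST (Finset.mem_coe.mp hj))).2
  have hCmeas : MeasurableSet C := (hf (measurableSet_singleton i)).compl
  have hone : ∀ S : Finset (Fin m), S ∈ Finset.powersetCard r (Finset.univ : Finset (Fin m)) →
      Pm (Set.pi ↑S (fun _ => C)) = ν C ^ r := by
    intro S hS
    have hpi : Set.pi ↑S (fun _ => C) =
        Set.pi univ (fun j => if j ∈ S then C else univ) := by
      ext y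
      simp only [Set.mem_pi, mem_univ, forall_true_left, Finset.mem_coe, true_implies]
      constructor
      · intro h j
        split_ifs with hj
        · exact h j hj
        · exact mem_univ _
      · intro h j hj
        have := h j
        rwa [if_pos hj] at this
    rw [hpi, hPm, Measure.pi_pi]
    have : ∀ j : Fin m, ν (if j ∈ S then C else univ) = if j ∈ S then ν C else 1 := by
      intro j; split_ifs <;> simp
    rw [Finset.prod_congr rfl fun j _ => this j, Finset.prod_ite_mem,
      Finset.univ_inter, Finset.prod_const, (Finset.mem_powersetCard.mp hS).2]
  calc Pm {y : Fin m → Fin k → X |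
        ¬ ((1/2 : ℝ) < (m : ℝ)⁻¹ * ∑ j : Fin m, if f (y j) = i then (1:ℝ) else 0)}
      ≤ Pm (⋃ S ∈ Finset.powersetCard r (Finset.univ : Finset (Fin m)),
          Set.pi ↑S (fun _ => C)) := measure_mono hsub
    _ ≤ ∑ S ∈ Finset.powersetCard r (Finset.univ : Finset (Fin m)),
          Pm (Set.pi ↑S (fun _ => C)) := measure_biUnion_finset_le _ _
    _ = (m.choose r : ℝ≥0∞) * ν C ^ r := by
        rw [Finset.sum_congr rfl hone, Finset.sum_const, Finset.card_powersetCard,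
          Finset.card_univ, Fintype.card_fin, nsmul_eq_mul]
    _ ≤ (2:ℝ≥0∞) ^ m * ((8 : ℝ≥0∞)⁻¹ ^ 2) ^ r := by
        have hch : m.choose r ≤ 2 ^ m := by
          have h1 : m.choose r ≤ ∑ j ∈ Finset.range (m+1), m.choose j :=
            Finset.single_le_sum (f := fun j => m.choose j) (fun _ _ => Nat.zero_le _)
              (Finset.mem_range.mpr (by omega))
          rwa [Nat.sum_range_choose m] at h1
        exact mul_le_mul' (by exact_mod_cast hch) (pow_le_pow_left' hq r)
    _ ≤ (2:ℝ≥0∞) ^ m * (8 : ℝ≥0∞)⁻¹ ^ m := by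
        rw [← pow_mul]
        exact mul_le_mul' le_rfl
          (pow_le_pow_right_of_le_one' (by norm_num : (8:ℝ≥0∞)⁻¹ ≤ 1) (by omega))
    _ = (4 : ℝ≥0∞)⁻¹ ^ m := by
        rw [← mul_pow]
        congr 1
        rw [show (8:ℝ≥0∞) = 2 * 4 by norm_num,
          ENNReal.mul_inv (Or.inl two_ne_zero) (Or.inl (by norm_num)), ← mul_assoc,
          ENNReal.mul_inv_cancel two_ne_zero (by norm_num), one_mul]


lemma tendsto_kk : Tendsto kk atTop atTop :=
  tendsto_nat_floor_atTop.comp (Real.tendsto_log_atTop.comp tendsto_natCast_atTop_atTop)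

lemma sq_le_two_pow : ∀ L : ℕ, 6 ≤ L → (L+1)*(L+1) ≤ 2^L := by
  intro L hL
  induction L, hL using Nat.le_induction with
  | base => norm_num
  | succ L hL ih =>
    have : (L+2)*(L+2) ≤ 2*((L+1)*(L+1)) := by nlinarith
    calc (L+1+1)*(L+1+1) ≤ 2*((L+1)*(L+1)) := by nlinarith
    _ ≤ 2*2^L := by omega
    _ = 2^(L+1) := by ring

lemma mm_large : ∀ᶠ n in atTop, Nat.log 2 n + 1 ≤ mm n := by
  filter_upwards [eventually_ge_atTop 64, tendsto_kk.eventually_ge_atTop 1] with n h64 hk1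
  set L := Nat.log 2 n with hL
  have hn0 : n ≠ 0 := by omega
  have hL6 : 6 ≤ L := (Nat.le_log_iff_pow_le one_lt_two hn0).mpr (by norm_num; omega)
  have h2L : 2 ^ L ≤ n := Nat.pow_log_le_self 2 hn0
  have hkkL : kk n ≤ L := by
    have hlog : Real.log n < (L + 1 : ℕ) := by
      have hnp : (0:ℝ) < n := by positivity
      have hcast : (n:ℝ) < (2:ℝ) ^ (L+1) := by
        exact_mod_cast Nat.lt_pow_succ_log_self one_lt_two n
      calc Real.log n < Real.log ((2:ℝ)^(L+1)) := Real.log_lt_log hnp hcast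
      _ = ((L+1:ℕ):ℝ) * Real.log 2 := Real.log_pow _ _
      _ < ((L+1:ℕ):ℝ) * 1 := by
          have h2 := Real.log_two_lt_d9
          have hp : (0:ℝ) < ((L+1:ℕ):ℝ) := by positivity
          push_cast
          push_cast at hp
          nlinarith
      _ = (L+1:ℕ) := mul_one _
    have := (Nat.floor_lt (Real.log_nonneg (by exact_mod_cast Nat.one_le_iff_ne_zero.mpr hn0))).mpr hlog
    simpa [kk] using Nat.lt_succ_iff.mp this
  have hmul : (L + 1) * kk n ≤ n :=
    calc (L+1) * kk n ≤ (L+1)*(L+1) := by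
          exact Nat.mul_le_mul_left _ (by omega)
    _ ≤ 2^L := sq_le_two_pow L hL6
    _ ≤ n := h2L
  exact (Nat.le_div_iff_mul_le (by omega)).mpr hmul

end Aux

open Set
open scoped ENNReal

/-- Block majority vote: if `P^n(φ_n = i) → 1`, then with `k_n = ⌊log n⌋`,
`m_n = ⌊n / k_n⌋` and `Y_{n,j}` the indicator that `φ_{k_n}` applied to the `j`-th
block of `k_n` consecutive samples equals `i`, almost surely under the i.i.d. law `μ`
the majority vote succeeds (i.e. `(1/m_n) ∑_j Y_{n,j} > 1/2`, so `ψ_n = i`) for all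
but finitely many `n`. -/
theorem stmt_3 {X : Type*} [MetricSpace X] [TopologicalSpace.SeparableSpace X]
    [MeasurableSpace X] [BorelSpace X]
    (P : Measure X) [IsProbabilityMeasure P]
    (μ : Measure (ℕ → X)) [IsProbabilityMeasure μ]
    (hproj : ∀ n : ℕ, Measure.map (fun ω (j : Fin n) => ω (j : ℕ)) μ =
      Measure.pi fun _ : Fin n => P)
    (φ : ∀ n : ℕ, (Fin n → X) → ℕ) (hφ : ∀ n, Measurable (φ n))
    (i : ℕ) (hi : i ≤ 1)
    (hcons : Tendsto (fun n => (Measure.pi fun _ : Fin n => P) {x | φ n x = i})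
      atTop (𝓝 1)) :
    μ {ω | ∀ᶠ n in atTop,
        (1 / 2 : ℝ) <
          ((mm n : ℕ) : ℝ)⁻¹ *
            ∑ j ∈ Finset.range (mm n),
              (if φ (kk n)
                  (fun t : Fin (kk n) => ω (kk n * j + (t : ℕ))) = i
                then (1 : ℝ) else 0)} = 1 := by
  classical
  -- eventual smallness of the failure probability of a single block
  have hqk : ∀ᶠ k in atTop,
      (Measure.pi fun _ : Fin k => P) {x | ¬ φ k x = i} ≤ (8:ℝ≥0∞)⁻¹ ^ 2 := by
    have h1 : ∀ᶠ k in atTop,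
        (1:ℝ≥0∞) - 64⁻¹ < (Measure.pi fun _ : Fin k => P) {x | φ k x = i} :=
      hcons.eventually (lt_mem_nhds
        (ENNReal.sub_lt_self ENNReal.one_ne_top one_ne_zero (by norm_num)))
    filter_upwards [h1] with k hk
    have hcs : {x : Fin k → X | ¬ φ k x = i} = {x | φ k x = i}ᶜ := rfl
    rw [hcs, prob_compl_eq_one_sub (s := {x | φ k x = i}) (hφ k (measurableSet_singleton i)),
      show ((8:ℝ≥0∞)⁻¹ ^ 2) = 64⁻¹ by rw [← ENNReal.inv_pow]; norm_num,
      tsub_le_iff_right]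
    calc (1:ℝ≥0∞) = (1 - 64⁻¹) + 64⁻¹ :=
          (tsub_add_cancel_of_le (by norm_num [ENNReal.inv_le_one])).symm
    _ ≤ (Measure.pi fun _ : Fin k => P) {x | φ k x = i} + 64⁻¹ := add_le_add_left hk.le _
    _ = 64⁻¹ + (Measure.pi fun _ : Fin k => P) {x | φ k x = i} := add_comm _ _
  obtain ⟨N₀, hN₀⟩ := eventually_atTop.mp
    (((tendsto_kk.eventually_ge_atTop 1).and mm_large).and (tendsto_kk.eventually hqk))
  -- the per-n bound
  have hbound : ∀ n : ℕ, 1 ≤ kk n → Nat.log 2 n + 1 ≤ mm n →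
      (Measure.pi fun _ : Fin (kk n) => P) {x | ¬ φ (kk n) x = i} ≤ (8:ℝ≥0∞)⁻¹ ^ 2 →
      μ {ω : ℕ → X | ¬ ((1 / 2 : ℝ) < ((mm n : ℕ) : ℝ)⁻¹ *
          ∑ j ∈ Finset.range (mm n),
            (if φ (kk n) (fun t : Fin (kk n) => ω (kk n * j + (t : ℕ))) = i
              then (1 : ℝ) else 0))} ≤ ENNReal.ofReal ((1/(n:ℝ))^2) := by
    intro n hk1 hmL hq
    have hm : 0 < mm n := by omega
    have hn1 : 1 ≤ n := by
      rcases Nat.eq_zero_or_pos n with h | h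
      · exfalso; rw [h] at hm; simp [mm] at hm
      · exact h
    have hB' : MeasurableSet {y : Fin (mm n) → Fin (kk n) → X |
        ¬ ((1/2:ℝ) < (mm n : ℝ)⁻¹ *
          ∑ j : Fin (mm n), if φ (kk n) (y j) = i then (1:ℝ) else 0)} := by
      have hsum : Measurable (fun y : Fin (mm n) → Fin (kk n) → X =>
          ∑ j : Fin (mm n), if φ (kk n) (y j) = i then (1:ℝ) else 0) :=
        Finset.measurable_sum _ fun j _ =>
          Measurable.ite (((hφ (kk n)).comp (measurable_pi_apply j))
            (measurableSet_singleton i)) measurable_const measurable_const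
      exact (measurableSet_lt measurable_const (measurable_const.mul hsum)).compl
    have hset : {ω : ℕ → X | ¬ ((1 / 2 : ℝ) < ((mm n : ℕ) : ℝ)⁻¹ *
          ∑ j ∈ Finset.range (mm n),
            (if φ (kk n) (fun t : Fin (kk n) => ω (kk n * j + (t : ℕ))) = i
              then (1 : ℝ) else 0))} =
        (fun ω (j : Fin (kk n * mm n)) => ω (j : ℕ)) ⁻¹'
          (blkG (kk n) (mm n) ⁻¹' {y : Fin (mm n) → Fin (kk n) → X |
            ¬ ((1/2:ℝ) < (mm n : ℝ)⁻¹ *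
              ∑ j : Fin (mm n), if φ (kk n) (y j) = i then (1:ℝ) else 0)}) := by
      ext ω
      simp only [mem_setOf_eq, mem_preimage]
      rw [← Fin.sum_univ_eq_sum_range
        (fun j => if φ (kk n) (fun t : Fin (kk n) => ω (kk n * j + (t:ℕ))) = i
          then (1:ℝ) else 0) (mm n)]
      exact Iff.rfl
    have hF : Measurable (fun ω : ℕ → X => fun j : Fin (kk n * mm n) => ω (j:ℕ)) :=
      measurable_pi_lambda _ fun j => measurable_pi_apply _
    calc μ {ω : ℕ → X | ¬ ((1 / 2 : ℝ) < ((mm n : ℕ) : ℝ)⁻¹ *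
          ∑ j ∈ Finset.range (mm n),
            (if φ (kk n) (fun t : Fin (kk n) => ω (kk n * j + (t : ℕ))) = i
              then (1 : ℝ) else 0))}
        = (Measure.map (fun ω (j : Fin (kk n * mm n)) => ω (j : ℕ)) μ)
            (blkG (kk n) (mm n) ⁻¹' {y : Fin (mm n) → Fin (kk n) → X |
              ¬ ((1/2:ℝ) < (mm n : ℝ)⁻¹ *
                ∑ j : Fin (mm n), if φ (kk n) (y j) = i then (1:ℝ) else 0)}) := by
          rw [hset, Measure.map_apply hF (blkG_measurable (kk n) (mm n) hB')]
      _ = (Measure.pi fun _ : Fin (kk n * mm n) => P)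
            (blkG (kk n) (mm n) ⁻¹' {y : Fin (mm n) → Fin (kk n) → X |
              ¬ ((1/2:ℝ) < (mm n : ℝ)⁻¹ *
                ∑ j : Fin (mm n), if φ (kk n) (y j) = i then (1:ℝ) else 0)}) := by
          rw [hproj (kk n * mm n)]
      _ = (Measure.pi fun _ : Fin (mm n) => Measure.pi fun _ : Fin (kk n) => P)
            {y : Fin (mm n) → Fin (kk n) → X |
              ¬ ((1/2:ℝ) < (mm n : ℝ)⁻¹ *
                ∑ j : Fin (mm n), if φ (kk n) (y j) = i then (1:ℝ) else 0)} :=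
          (blkG_measurePreserving P (kk n) (mm n) (by omega)).measure_preimage
            hB'.nullMeasurableSet
      _ ≤ (4:ℝ≥0∞)⁻¹ ^ (mm n) := badBound P hm (φ (kk n)) (hφ (kk n)) i hq
      _ ≤ ENNReal.ofReal ((1/(n:ℝ))^2) := by
          have h1 : (4:ℝ≥0∞)⁻¹ ^ (mm n) ≤ 4⁻¹ ^ (Nat.log 2 n + 1) :=
            pow_le_pow_right_of_le_one' (by norm_num : (4:ℝ≥0∞)⁻¹ ≤ 1) hmL
          have h4 : (4:ℝ≥0∞)⁻¹ = (2⁻¹)^2 := by rw [← ENNReal.inv_pow]; norm_num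
          have h2 : (4:ℝ≥0∞)⁻¹ ^ (Nat.log 2 n + 1) =
              ((2:ℝ≥0∞)⁻¹ ^ (Nat.log 2 n + 1))^2 := by
            rw [h4, pow_right_comm]
          have h3 : (2:ℝ≥0∞)⁻¹ ^ (Nat.log 2 n + 1) ≤ (n:ℝ≥0∞)⁻¹ := by
            rw [← ENNReal.inv_pow]
            apply ENNReal.inv_le_inv.mpr
            exact_mod_cast (Nat.lt_pow_succ_log_self one_lt_two n).le
          have hnp : (0:ℝ) < n := by exact_mod_cast hn1
          calc (4:ℝ≥0∞)⁻¹ ^ (mm n) ≤ ((2:ℝ≥0∞)⁻¹ ^ (Nat.log 2 n + 1))^2 := h2 ▸ h1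
          _ ≤ ((n:ℝ≥0∞)⁻¹)^2 := pow_le_pow_left' h3 2
          _ = ENNReal.ofReal ((1/(n:ℝ))^2) := by
              rw [ENNReal.ofReal_pow (by positivity), one_div,
                ENNReal.ofReal_inv_of_pos hnp, ENNReal.ofReal_natCast]
  -- Borel–Cantelli
  have hsummable : Summable (fun n : ℕ => (1/(n:ℝ))^2) := by
    simp only [div_pow, one_pow]
    exact Real.summable_one_div_nat_pow.mpr one_lt_two
  have hμp : ∀ n : ℕ, μ {ω : ℕ → X | (¬ ((1 / 2 : ℝ) < ((mm n : ℕ) : ℝ)⁻¹ *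
        ∑ j ∈ Finset.range (mm n),
          (if φ (kk n) (fun t : Fin (kk n) => ω (kk n * j + (t : ℕ))) = i
            then (1 : ℝ) else 0))) ∧ N₀ ≤ n} ≤ ENNReal.ofReal ((1/(n:ℝ))^2) := by
    intro n
    rcases le_or_gt N₀ n with h | h
    · obtain ⟨⟨hk1, hmL⟩, hq⟩ := hN₀ n h
      exact le_trans (measure_mono fun ω hω => hω.1) (hbound n hk1 hmL hq)
    · have hempty : {ω : ℕ → X | (¬ ((1 / 2 : ℝ) < ((mm n : ℕ) : ℝ)⁻¹ *
          ∑ j ∈ Finset.range (mm n),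
            (if φ (kk n) (fun t : Fin (kk n) => ω (kk n * j + (t : ℕ))) = i
              then (1 : ℝ) else 0))) ∧ N₀ ≤ n} = ∅ :=
        eq_empty_iff_forall_notMem.mpr fun ω hω => (by omega : ¬ N₀ ≤ n) hω.2
      rw [hempty]
      simp
  have hsum : (∑' n : ℕ, μ {ω : ℕ → X | (¬ ((1 / 2 : ℝ) < ((mm n : ℕ) : ℝ)⁻¹ *
        ∑ j ∈ Finset.range (mm n),
          (if φ (kk n) (fun t : Fin (kk n) => ω (kk n * j + (t : ℕ))) = i
            then (1 : ℝ) else 0))) ∧ N₀ ≤ n}) ≠ ⊤ := by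
    refine ne_top_of_le_ne_top ?_ (ENNReal.tsum_le_tsum hμp)
    rw [← ENNReal.ofReal_tsum_of_nonneg (fun n => by positivity) hsummable]
    exact ENNReal.ofReal_ne_top
  have h0 := measure_setOf_frequently_eq_zero (μ := μ) hsum
  have hcompl : {ω : ℕ → X | ∀ᶠ n in atTop,
        (1 / 2 : ℝ) < ((mm n : ℕ) : ℝ)⁻¹ *
          ∑ j ∈ Finset.range (mm n),
            (if φ (kk n) (fun t : Fin (kk n) => ω (kk n * j + (t : ℕ))) = i
              then (1 : ℝ) else 0)}ᶜ ⊆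
      {ω : ℕ → X | ∃ᶠ n in atTop, (¬ ((1 / 2 : ℝ) < ((mm n : ℕ) : ℝ)⁻¹ *
        ∑ j ∈ Finset.range (mm n),
          (if φ (kk n) (fun t : Fin (kk n) => ω (kk n * j + (t : ℕ))) = i
            then (1 : ℝ) else 0))) ∧ N₀ ≤ n} := by
    intro ω hω
    have hfreq : ∃ᶠ n in atTop, ¬ ((1 / 2 : ℝ) < ((mm n : ℕ) : ℝ)⁻¹ *
        ∑ j ∈ Finset.range (mm n),
          (if φ (kk n) (fun t : Fin (kk n) => ω (kk n * j + (t : ℕ))) = i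
            then (1 : ℝ) else 0)) := by
      rw [← Filter.not_eventually]
      exact hω
    exact hfreq.and_eventually (eventually_ge_atTop N₀)
  have hc0 : μ {ω : ℕ → X | ∀ᶠ n in atTop,
      (1 / 2 : ℝ) < ((mm n : ℕ) : ℝ)⁻¹ *
        ∑ j ∈ Finset.range (mm n),
          (if φ (kk n) (fun t : Fin (kk n) => ω (kk n * j + (t : ℕ))) = i
            then (1 : ℝ) else 0)}ᶜ = 0 :=
    measure_mono_null hcompl h0
  refine le_antisymm prob_le_one ?_
  calc (1:ℝ≥0∞) = μ univ := measure_univ.symm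
  _ = μ ({ω : ℕ → X | ∀ᶠ n in atTop,
      (1 / 2 : ℝ) < ((mm n : ℕ) : ℝ)⁻¹ *
        ∑ j ∈ Finset.range (mm n),
          (if φ (kk n) (fun t : Fin (kk n) => ω (kk n * j + (t : ℕ))) = i
            then (1 : ℝ) else 0)} ∪ {ω : ℕ → X | ∀ᶠ n in atTop,
      (1 / 2 : ℝ) < ((mm n : ℕ) : ℝ)⁻¹ *
        ∑ j ∈ Finset.range (mm n),
          (if φ (kk n) (fun t : Fin (kk n) => ω (kk n * j + (t : ℕ))) = i
            then (1 : ℝ) else 0)}ᶜ) := by rw [union_compl_self]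
  _ ≤ μ {ω : ℕ → X | ∀ᶠ n in atTop,
      (1 / 2 : ℝ) < ((mm n : ℕ) : ℝ)⁻¹ *
        ∑ j ∈ Finset.range (mm n),
          (if φ (kk n) (fun t : Fin (kk n) => ω (kk n * j + (t : ℕ))) = i
            then (1 : ℝ) else 0)} + μ {ω : ℕ → X | ∀ᶠ n in atTop,
      (1 / 2 : ℝ) < ((mm n : ℕ) : ℝ)⁻¹ *
        ∑ j ∈ Finset.range (mm n),
          (if φ (kk n) (fun t : Fin (kk n) => ω (kk n * j + (t : ℕ))) = i
            then (1 : ℝ) else 0)}ᶜ := measure_union_le _ _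
  _ = μ {ω : ℕ → X | ∀ᶠ n in atTop,
      (1 / 2 : ℝ) < ((mm n : ℕ) : ℝ)⁻¹ *
        ∑ j ∈ Finset.range (mm n),
          (if φ (kk n) (fun t : Fin (kk n) => ω (kk n * j + (t : ℕ))) = i
            then (1 : ℝ) else 0)} := by rw [hc0, add_zero]
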